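/- Every dense complete full subcategory S of an essentially small triangulated category C contains the zero object, is closed under isomorphisms, is closed under finite direct sums, is closed under the shift functor and its inverse, and is closed under extensions (if X → Y → Z → X[1] is a distinguished triangle with X and Z in S, then Y is in S); in other words, S is a dense triangulated subcategory of C. -/

import Mathlib

/-!
Grothendieck groups of essentially small triangulated categories.

`K0 C` is the quotient of the free abelian group on the isomorphism classes of objects
of `C` by the subgroup generated by the Euler relations `⟨X⟩ - ⟨Y⟩ + ⟨Z⟩` coming from
distinguished triangles `X ⟶ Y ⟶ Z ⟶ X⟦1⟧`; `K0.mk C A` is the class `[A]`.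
A full subcategory (identified with its set of objects) is *dense* if every object of `C`
is a direct summand of an object of the subcategory, and *complete* if whenever two of
the three objects of a distinguished triangle lie in it, so does the third.
-/

open CategoryTheory CategoryTheory.Limits CategoryTheory.Pretriangulated ZeroObject

universe w v u

namespace TriK0

variable (C : Type u) [Category.{v} C] [HasZeroObject C] [Preadditive C] [HasShift C ℤ]
  [∀ n : ℤ, (shiftFunctor C n).Additive] [Pretriangulated C]

/-- The isomorphism class of an object. -/
def isoCl (A : C) : Quotient (isIsomorphicSetoid C) := Quotient.mk (isIsomorphicSetoid C) A

/-- The subgroup of Euler relations coming from distinguished triangles. -/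
def K0Rels : AddSubgroup (FreeAbelianGroup (Quotient (isIsomorphicSetoid C))) :=
  AddSubgroup.closure
    { x | ∃ T : Triangle C, T ∈ (distTriang C) ∧
        x = FreeAbelianGroup.of (isoCl C T.obj₁) - FreeAbelianGroup.of (isoCl C T.obj₂)
          + FreeAbelianGroup.of (isoCl C T.obj₃) }

/-- The Grothendieck group of the triangulated category `C`. -/
def K0 : Type u := FreeAbelianGroup (Quotient (isIsomorphicSetoid C)) ⧸ K0Rels C

noncomputable instance : AddCommGroup (K0 C) :=
  QuotientAddGroup.Quotient.addCommGroup _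

/-- The class `[A]` of an object `A` in the Grothendieck group. -/
def K0.mk (A : C) : K0 C := QuotientAddGroup.mk (FreeAbelianGroup.of (isoCl C A))

/-- A full subcategory is dense if every object of `C` is a direct summand of an object
of the subcategory. -/
noncomputable def DenseSub (S : Set C) : Prop :=
  ∀ A : C, ∃ X ∈ S, ∃ A' : C, Nonempty (X ≅ A ⊞ A')

/-- A full subcategory is complete if, in any distinguished triangle, whenever two of the
three objects belong to the subcategory, so does the third. -/
def CompleteSub (S : Set C) : Prop :=
  ∀ T ∈ (distTriang C),
    (T.obj₁ ∈ S → T.obj₂ ∈ S → T.obj₃ ∈ S) ∧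
    (T.obj₁ ∈ S → T.obj₃ ∈ S → T.obj₂ ∈ S) ∧
    (T.obj₂ ∈ S → T.obj₃ ∈ S → T.obj₁ ∈ S)

end TriK0

open TriK0

/-- Every dense complete full subcategory of a triangulated category contains the zero
object, is closed under isomorphisms, finite direct sums, shifts in both directions,
and extensions: it is a dense triangulated subcategory. -/
theorem dense_complete_is_triangulated_subcategory
    (C : Type u) [Category.{v} C] [HasZeroObject C] [Preadditive C] [HasShift C ℤ]
    [∀ n : ℤ, (shiftFunctor C n).Additive] [Pretriangulated C] [EssentiallySmall.{w} C]
    (S : Set C) (hdense : DenseSub C S) (hcomplete : CompleteSub C S) :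
    (0 : C) ∈ S ∧
    (∀ A B : C, (A ≅ B) → A ∈ S → B ∈ S) ∧
    (∀ A B : C, A ∈ S → B ∈ S → (A ⊞ B) ∈ S) ∧
    (∀ A : C, A ∈ S → (shiftFunctor C (1 : ℤ)).obj A ∈ S) ∧
    (∀ A : C, A ∈ S → (shiftFunctor C (-1 : ℤ)).obj A ∈ S) ∧
    (∀ T ∈ (distTriang C), T.obj₁ ∈ S → T.obj₃ ∈ S → T.obj₂ ∈ S) := by
  obtain ⟨X, hX, -⟩ := hdense 0
  have h0 : (0 : C) ∈ S := by
    have := (hcomplete _ (contractible_distinguished X)).1 hX hX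
    simpa [contractibleTriangle] using this
  have hiso : ∀ A B : C, (A ≅ B) → A ∈ S → B ∈ S := by
    intro A B e hA
    have hd : Triangle.mk e.hom (0 : B ⟶ (0 : C)) (0 : (0 : C) ⟶ A⟦(1:ℤ)⟧) ∈ distTriang C := by
      refine isomorphic_distinguished _ (contractible_distinguished A) _ ?_
      exact Triangle.isoMk _ _ (Iso.refl _) e.symm (Iso.refl _) (by simp [Triangle.mk]; erw [Category.comp_id]; exact e.hom_inv_id) (by simp [Triangle.mk]; erw [Limits.zero_comp, Limits.comp_zero]) (by simp [Triangle.mk]; erw [Limits.zero_comp])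
    exact (hcomplete _ hd).2.1 hA h0
  have hshift1 : ∀ A : C, A ∈ S → (shiftFunctor C (1 : ℤ)).obj A ∈ S := by
    intro A hA
    have hd := rot_of_distTriang _ (contractible_distinguished A)
    have := (hcomplete _ hd).1 hA h0
    simpa [contractibleTriangle, Triangle.rotate, Triangle.mk] using this
  refine ⟨h0, hiso, ?_, hshift1, ?_, fun T hT h1 h3 => (hcomplete T hT).2.1 h1 h3⟩
  · intro A B hA hB
    exact (hcomplete _ (binaryBiproductTriangle_distinguished A B)).2.1 hA hB
  · intro A hA
    have hd := rot_of_distTriang _ (contractible_distinguished ((shiftFunctor C (-1:ℤ)).obj A))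
    have h3 : ((shiftFunctor C (-1:ℤ)).obj A)⟦(1:ℤ)⟧ ∈ S :=
      hiso A _ ((shiftNegShift A 1).symm) hA
    have := (hcomplete _ hd).2.2 h0 h3
    simpa [contractibleTriangle, Triangle.rotate, Triangle.mk] using this
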